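/- Let f : ℝ → ℝ satisfy |f(x)| ≤ c|x| for all x ∈ ℝ, where 0 ≤ c < 1/(n-1) and n ≥ 2. Then for every n×n real symmetric positive definite matrix A, the matrix f*[A], obtained by applying f to every off-diagonal entry of A and leaving the diagonal unchanged, is positive definite. -/

import Mathlib

open scoped Matrix


/-- `f*[A]`: apply `f` to off-diagonal entries, leave diagonal unchanged. -/
def offDiagApply {n : ℕ} (f : ℝ → ℝ) (A : Matrix (Fin n) (Fin n) ℝ) :
    Matrix (Fin n) (Fin n) ℝ :=
  Matrix.of fun i j => if i = j then A i i else f (A i j)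

theorem stmt_1 (n : ℕ) (hn : 2 ≤ n) (f : ℝ → ℝ) (c : ℝ)
    (hc0 : 0 ≤ c) (hc1 : c < 1 / ((n : ℝ) - 1))
    (hf : ∀ x : ℝ, |f x| ≤ c * |x|)
    (A : Matrix (Fin n) (Fin n) ℝ) (hAs : A.IsSymm) (hA : A.PosDef) :
    (offDiagApply f A).PosDef := by
  classical
  have hn1 : (0:ℝ) < (n:ℝ) - 1 := by
    have : (2:ℝ) ≤ (n:ℝ) := by exact_mod_cast hn
    linarith
  have hcn : c * ((n:ℝ) - 1) < 1 := by
    rw [lt_div_iff₀ hn1] at hc1; linarith [hc1]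
  -- the multiplier matrix
  set M : Matrix (Fin n) (Fin n) ℝ :=
    Matrix.of (fun i j => if i = j then 1 else if A i j = 0 then 0 else f (A i j) / A i j)
    with hMdef
  have hf0 : f 0 = 0 := by
    have := hf 0
    simp only [abs_zero, mul_zero] at this
    exact abs_eq_zero.mp (le_antisymm this (abs_nonneg _))
  -- entrywise factorization
  have hE : ∀ i j, offDiagApply f A i j = A i j * M i j := by
    intro i j
    by_cases h : i = j
    · simp [offDiagApply, M, h]
    · by_cases h0 : A i j = 0
      · simp [offDiagApply, M, h, h0, hf0]
      · simp [offDiagApply, M, h, h0]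
        field_simp
  -- bound on entries of M
  have hMb : ∀ i j, i ≠ j → |M i j| ≤ c := by
    intro i j h
    by_cases h0 : A i j = 0
    · simp [M, h, h0, hc0]
    · have : |M i j| = |f (A i j)| / |A i j| := by
        simp [M, h, h0, abs_div]
      rw [this, div_le_iff₀ (abs_pos.mpr h0)]
      exact hf (A i j)
  have hMdiag : ∀ i, M i i = 1 := fun i => by simp [M]
  -- M is positive semidefinite
  have hMsymm : M.IsHermitian := by
    ext i j
    have hAij : A j i = A i j := hAs.apply i j
    simp only [Matrix.conjTranspose_apply, star_trivial]
    by_cases h : i = j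
    · simp [M, h]
    · simp [M, h, Ne.symm h, hAij]
  have hMpsd : M.PosSemidef := by
    refine Matrix.posSemidef_iff_dotProduct_mulVec.mpr ⟨hMsymm, fun x => ?_⟩
    have hxx : star x = x := by simp
    rw [hxx]
    have expand : x ⬝ᵥ M *ᵥ x = ∑ i, ∑ j, x i * M i j * x j := by
      simp [dotProduct, Matrix.mulVec, Finset.mul_sum, mul_assoc]
    rw [expand]
    have key : ∀ i j : Fin n,
        (1 + c) * (if i = j then x i ^ 2 else 0) - c * (|x i| * |x j|)
          ≤ x i * M i j * x j := by
      intro i j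
      by_cases h : i = j
      · subst h
        simp [hMdiag i, ← sq, abs_mul_abs_self]
        ring_nf
        nlinarith [sq_nonneg (x i)]
      · simp only [if_neg h]
        have h1 : |x i * M i j * x j| ≤ c * (|x i| * |x j|) := by
          rw [abs_mul, abs_mul]
          calc |x i| * |M i j| * |x j| ≤ |x i| * c * |x j| := by
                gcongr; exacts [hMb i j h]
            _ = c * (|x i| * |x j|) := by ring
        nlinarith [neg_abs_le (x i * M i j * x j)]
    have hsum : ∑ i, ∑ j, ((1 + c) * (if i = j then x i ^ 2 else 0) - c * (|x i| * |x j|))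
        ≤ ∑ i, ∑ j, x i * M i j * x j :=
      Finset.sum_le_sum fun i _ => Finset.sum_le_sum fun j _ => key i j
    refine le_trans ?_ hsum
    have h2 : ∑ i, ∑ j, ((1 + c) * (if i = j then x i ^ 2 else 0) - c * (|x i| * |x j|))
        = (1 + c) * (∑ i, x i ^ 2) - c * (∑ i, |x i|) ^ 2 := by
      simp only [Finset.sum_sub_distrib, ← Finset.mul_sum, Finset.sum_ite_eq,
        Finset.mem_univ, if_pos]
      rw [sq, Finset.sum_mul_sum]
      ring_nf
      simp [Finset.mul_sum]
    rw [h2]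
    have hCS : (∑ i, |x i|) ^ 2 ≤ (n:ℝ) * ∑ i, |x i| ^ 2 := by
      have := sq_sum_le_card_mul_sum_sq (s := (Finset.univ : Finset (Fin n)))
        (f := fun i => |x i|)
      simpa using this
    have habs : ∑ i, |x i| ^ 2 = ∑ i, x i ^ 2 := by
      simp [sq_abs]
    rw [habs] at hCS
    have hS : (0:ℝ) ≤ ∑ i, x i ^ 2 := Finset.sum_nonneg fun i _ => sq_nonneg _
    nlinarith [mul_le_mul_of_nonneg_left hCS hc0]
  -- factor M = Bᴴ * B
  open scoped MatrixOrder in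
  obtain ⟨B, hB⟩ := CStarAlgebra.nonneg_iff_eq_star_mul_self.mp hMpsd.nonneg
  have hMB : ∀ i j, M i j = ∑ k, B k i * B k j := by
    intro i j
    rw [hB]
    simp [Matrix.mul_apply]
  -- conclude
  have hherm : (offDiagApply f A).IsHermitian := by
    ext i j
    simp only [Matrix.conjTranspose_apply, star_trivial, hE]
    rw [show A j i = A i j from hAs.apply i j,
      show M j i = M i j from congrFun (congrFun hMsymm.symm j) i ▸ by
        have := congrFun (congrFun hMsymm j) i
        simpa using this.symm]
  refine Matrix.posDef_iff_dotProduct_mulVec.mpr ⟨hherm, fun x hx => ?_⟩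
  have hxx : star x = x := by simp
  rw [hxx]
  have expand : x ⬝ᵥ (offDiagApply f A) *ᵥ x
      = ∑ k, (fun i => B k i * x i) ⬝ᵥ A *ᵥ (fun i => B k i * x i) := by
    have hterm : ∀ k, (fun i => B k i * x i) ⬝ᵥ A *ᵥ (fun i => B k i * x i)
        = ∑ i, ∑ j, x i * (A i j * (B k i * B k j)) * x j := by
      intro k
      simp only [dotProduct, Matrix.mulVec, Finset.mul_sum]
      exact Finset.sum_congr rfl fun i _ => Finset.sum_congr rfl fun j _ => by ring
    calc x ⬝ᵥ (offDiagApply f A) *ᵥ x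
        = ∑ i, ∑ j, ∑ k, x i * (A i j * (B k i * B k j)) * x j := by
          simp only [dotProduct, Matrix.mulVec, hE, hMB, Finset.mul_sum,
            Finset.sum_mul]
          exact Finset.sum_congr rfl fun i _ => Finset.sum_congr rfl fun j _ =>
            Finset.sum_congr rfl fun k _ => by ring
      _ = ∑ k, ∑ i, ∑ j, x i * (A i j * (B k i * B k j)) * x j := by
          rw [show (∑ i, ∑ j, ∑ k, x i * (A i j * (B k i * B k j)) * x j)
              = ∑ i, ∑ k, ∑ j, x i * (A i j * (B k i * B k j)) * x j from
            Finset.sum_congr rfl fun i _ => Finset.sum_comm, Finset.sum_comm]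
      _ = ∑ k, (fun i => B k i * x i) ⬝ᵥ A *ᵥ (fun i => B k i * x i) :=
          Finset.sum_congr rfl fun k _ => (hterm k).symm
  rw [expand]
  obtain ⟨i0, hi0⟩ : ∃ i, x i ≠ 0 := Function.ne_iff.mp hx
  obtain ⟨k0, hk0⟩ : ∃ k, B k i0 ≠ 0 := by
    by_contra h
    push_neg at h
    have : M i0 i0 = 0 := by
      rw [hMB]; exact Finset.sum_eq_zero fun k _ => by rw [h k]; ring
    rw [hMdiag i0] at this; exact one_ne_zero this
  refine Finset.sum_pos' (fun k _ => ?_) ⟨k0, Finset.mem_univ k0, ?_⟩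
  · have := hA.posSemidef.dotProduct_mulVec_nonneg (fun i => B k i * x i)
    simpa using this
  · have hy : (fun i => B k0 i * x i) ≠ 0 := by
      intro h
      exact mul_ne_zero hk0 hi0 (congrFun h i0)
    have := hA.dotProduct_mulVec_pos hy
    simpa using this
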